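/- Let A be an infinite dimensional simple unital C*-algebra and B ⊆ A a centrally large subalgebra, and let p ∈ B be a projection. Then for any finite families p a₁ p, …, p aₘ p ∈ pAp, p b₁ p, …, p bₙ p ∈ (pAp)₊, any ε > 0, any positive x ∈ pAp with ‖x‖ = 1, and any nonzero positive y ∈ pBp, there exist c₁,…,cₘ ∈ pBp, positive d₁,…,dₙ ∈ pBp, and g ∈ pBp with: 0 ≤ g ≤ 1; ‖(p-g)(p aⱼ p) - cⱼ‖ < ε and ‖(p-g)(p bᵢ p)(p-g) - dᵢ‖ < ε; g ≲_{pBp} y and g ≲_{pAp} x; ‖(p-g)x(p-g)‖ > 1 - ε; and ‖g(p aⱼ p) - (p aⱼ p)g‖ < ε, ‖g(p bᵢ p) - (p bᵢ p)g‖ < ε. -/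

import Mathlib

open Filter Topology

/-- Cuntz subequivalence: `a ≾ b` iff some sequence `vₙ b vₙ*` converges to `a`. -/
def CuntzSubeq {R : Type*} [Mul R] [Star R] [TopologicalSpace R] (a b : R) : Prop :=
  ∃ v : ℕ → R, Tendsto (fun n => v n * b * star (v n)) atTop (𝓝 a)

/-- Cuntz subequivalence witnessed inside a subset `S`. -/
def CuntzSubeqIn {R : Type*} [Mul R] [Star R] [TopologicalSpace R]
    (S : Set R) (a b : R) : Prop :=
  ∃ v : ℕ → R, (∀ n, v n ∈ S) ∧ Tendsto (fun n => v n * b * star (v n)) atTop (𝓝 a)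

/-- Topological simplicity of a C*-algebra: the only closed two-sided ideals are
`⊥` and `⊤`. -/
def CStarSimple (A : Type*) [CStarAlgebra A] : Prop :=
  ∀ I : TwoSidedIdeal A, IsClosed (I : Set A) → I = ⊥ ∨ I = ⊤

variable {A : Type*} [CStarAlgebra A] [PartialOrder A] [StarOrderedRing A]

/-- Phillips' notion of a large subalgebra of a unital C*-algebra. -/
structure IsLargeSubalgebra (B : StarSubalgebra ℂ A) : Prop where
  closed : IsClosed (B : Set A)
  approx : ∀ (m : ℕ) (a : Fin m → A) (ε : ℝ), 0 < ε →
    ∀ x : A, 0 ≤ x → ‖x‖ = 1 →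
    ∀ y : A, y ∈ B → 0 ≤ y → y ≠ 0 →
    ∃ (c : Fin m → A) (g : A), g ∈ B ∧ 0 ≤ g ∧ g ≤ 1 ∧
      (∀ j, ‖c j - a j‖ < ε) ∧ (∀ j, (1 - g) * c j ∈ B) ∧
      CuntzSubeqIn (B : Set A) g y ∧ CuntzSubeq g x ∧
      ‖(1 - g) * x * (1 - g)‖ > 1 - ε

/-- A centrally large subalgebra (Archey–Phillips): large, with the cut-down element `g`
almost commuting with the given finite set. -/
structure IsCentrallyLargeSubalgebra (B : StarSubalgebra ℂ A) : Prop where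
  closed : IsClosed (B : Set A)
  approx : ∀ (m : ℕ) (a : Fin m → A) (ε : ℝ), 0 < ε →
    ∀ x : A, 0 ≤ x → ‖x‖ = 1 →
    ∀ y : A, y ∈ B → 0 ≤ y → y ≠ 0 →
    ∃ (c : Fin m → A) (g : A), g ∈ B ∧ 0 ≤ g ∧ g ≤ 1 ∧
      (∀ j, ‖c j - a j‖ < ε) ∧ (∀ j, (1 - g) * c j ∈ B) ∧
      CuntzSubeqIn (B : Set A) g y ∧ CuntzSubeq g x ∧
      ‖(1 - g) * x * (1 - g)‖ > 1 - ε ∧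
      (∀ j, ‖g * a j - a j * g‖ < ε)

/-- The corner version of central largeness: if `B ⊆ A` is centrally large and `p ∈ B`
is a projection, the defining approximation property holds inside the corner `pAp`
relative to `pBp`. -/
theorem centrallyLarge_corner {A : Type*} [CStarAlgebra A] [PartialOrder A]
    [StarOrderedRing A] (hdim : ¬ FiniteDimensional ℂ A) (hsimple : CStarSimple A)
    (B : StarSubalgebra ℂ A) (hB : IsCentrallyLargeSubalgebra B)
    (p : A) (hpB : p ∈ B) (hp : IsIdempotentElem p) (hpsa : IsSelfAdjoint p)
    (m n : ℕ) (a : Fin m → A) (b : Fin n → A) (hb : ∀ i, 0 ≤ p * b i * p)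
    (ε : ℝ) (hε : 0 < ε)
    (x : A) (hx : 0 ≤ x) (hxp : x = p * x * p) (hxnorm : ‖x‖ = 1)
    (y : A) (hyB : y ∈ B) (hy : 0 ≤ y) (hyp : y = p * y * p) (hy0 : y ≠ 0) :
    ∃ (c : Fin m → A) (d : Fin n → A) (g : A),
      (∀ j, c j ∈ B ∧ c j = p * c j * p) ∧
      (∀ i, d i ∈ B ∧ d i = p * d i * p ∧ 0 ≤ d i) ∧
      g ∈ B ∧ g = p * g * p ∧ 0 ≤ g ∧ g ≤ 1 ∧
      (∀ j, ‖(p - g) * (p * a j * p) - c j‖ < ε) ∧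
      (∀ i, ‖(p - g) * (p * b i * p) * (p - g) - d i‖ < ε) ∧
      CuntzSubeqIn {z : A | z ∈ B ∧ z = p * z * p} g y ∧
      CuntzSubeqIn {z : A | z = p * z * p} g x ∧
      ‖(p - g) * x * (p - g)‖ > 1 - ε ∧
      (∀ j, ‖g * (p * a j * p) - (p * a j * p) * g‖ < ε) ∧
      (∀ i, ‖g * (p * b i * p) - (p * b i * p) * g‖ < ε) := by
    classical
  have : Nontrivial A := by
    refine ⟨⟨x, 0, fun h => ?_⟩⟩
    rw [h, norm_zero] at hxnorm
    exact one_ne_zero hxnorm.symm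
  have hpp : p * p = p := hp
  have hpp' : ∀ z : A, p * (p * z) = p * z := fun z => by rw [← mul_assoc, hpp]
  -- norm of the projection
  have hp_norm : ‖p‖ ≤ 1 := by
    have h := CStarRing.norm_star_mul_self (x := p)
    rw [hpsa.star_eq, hpp] at h
    nlinarith [norm_nonneg p]
  have hmulle : ∀ z w : A, ‖z‖ ≤ 1 → ‖z * w‖ ≤ ‖w‖ := by
    intro z w hz
    refine (norm_mul_le z w).trans ?_
    nlinarith [norm_nonneg w]
  have hmulle' : ∀ z w : A, ‖w‖ ≤ 1 → ‖z * w‖ ≤ ‖z‖ := by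
    intro z w hw
    refine (norm_mul_le z w).trans ?_
    nlinarith [norm_nonneg z]
  have hpzp : ∀ z : A, ‖p * z * p‖ ≤ ‖z‖ := fun z =>
    (hmulle' _ _ hp_norm).trans (hmulle _ _ hp_norm)
  have hp_le_one : p ≤ 1 := by
    have h1 : (1 - p) * (1 - p) = 1 - p := by
      simp only [mul_sub, sub_mul, one_mul, mul_one, hpp]
      abel
    have h2 : (0 : A) ≤ 1 - p := by
      have h3 := star_mul_self_nonneg (1 - p)
      rwa [star_sub, star_one, hpsa.star_eq, h1] at h3
    exact sub_nonneg.mp h2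
  have hre : ∀ z : A, p * (p * z * p) * p = p * z * p := by
    intro z
    simp only [mul_assoc, hpp, hpp']
  have hdcorner : ∀ t : A, p * ((p * t) * star (p * t)) * p = (p * t) * star (p * t) := by
    intro t
    have h1 : star (p * t) = star t * p := by rw [star_mul, hpsa.star_eq]
    rw [h1]
    simp only [mul_assoc, hpp, hpp']
  -- square roots of the corner positive elements
  set s : Fin n → A := fun i => CFC.sqrt (p * b i * p) with hs_def
  have hs_nonneg : ∀ i, 0 ≤ s i := fun i => CFC.sqrt_nonneg _
  have hs_sq : ∀ i, s i * s i = p * b i * p := fun i => CFC.sqrt_mul_sqrt_self _ (hb i)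
  have hs_sa : ∀ i, star (s i) = s i := fun i => (IsSelfAdjoint.of_nonneg (hs_nonneg i)).star_eq
  -- constants
  set K : ℝ := 1 + ∑ i, ‖s i‖ with hK_def
  have hsum_nonneg : (0 : ℝ) ≤ ∑ i, ‖s i‖ := Finset.sum_nonneg fun i _ => norm_nonneg _
  have hK1 : (1 : ℝ) ≤ K := by rw [hK_def]; linarith
  have hsK : ∀ i, ‖s i‖ ≤ K - 1 := by
    intro i
    have h := Finset.single_le_sum (f := fun i => ‖s i‖)
      (fun i _ => norm_nonneg _) (Finset.mem_univ i)
    rw [hK_def]; simpa using h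
  obtain ⟨δ, hδ0, hδ1, hδ3, hδK⟩ :
      ∃ δ : ℝ, 0 < δ ∧ δ ≤ 1 ∧ δ ≤ ε / 3 ∧ δ * (2 * K + 1) ≤ ε := by
    have hK0 : (0 : ℝ) < 2 * K + 1 := by linarith
    refine ⟨min 1 (min (ε / 3) (ε / (2 * K + 1))), ?_, min_le_left _ _,
      (min_le_right _ _).trans (min_le_left _ _), ?_⟩
    · exact lt_min one_pos (lt_min (by positivity) (by positivity))
    · have h := (min_le_right (1 : ℝ) _).trans
        (min_le_right (ε / 3) (ε / (2 * K + 1)))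
      calc min 1 (min (ε / 3) (ε / (2 * K + 1))) * (2 * K + 1)
          ≤ ε / (2 * K + 1) * (2 * K + 1) := mul_le_mul_of_nonneg_right h hK0.le
        _ = ε := div_mul_cancel₀ _ hK0.ne'
  have hδε : δ < ε := lt_of_le_of_lt hδ3 (by linarith)
  -- apply central largeness to the combined family
  obtain ⟨c', g', hg'B, hg'0, hg'1, happ, hinB, hCy, hCx, hnrm, hcomm⟩ :=
    hB.approx (m + (1 + (n + n)))
      (Fin.append (fun j => p * a j * p)
        (Fin.append (fun _ : Fin 1 => p)
          (Fin.append (fun i => p * b i * p) s))) δ hδ0 x hx hxnorm y hyB hy hy0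
  -- specialize the approximation data at the various indices
  have happA : ∀ j : Fin m,
      ‖c' (Fin.castAdd (1 + (n + n)) j) - p * a j * p‖ < δ := by
    intro j
    simpa only [Fin.append_left] using happ (Fin.castAdd (1 + (n + n)) j)
  have happS : ∀ i : Fin n,
      ‖c' (Fin.natAdd m (Fin.natAdd 1 (Fin.natAdd n i))) - s i‖ < δ := by
    intro i
    simpa only [Fin.append_right] using
      happ (Fin.natAdd m (Fin.natAdd 1 (Fin.natAdd n i)))
  have hcommA : ∀ j : Fin m,
      ‖g' * (p * a j * p) - (p * a j * p) * g'‖ < δ := by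
    intro j
    simpa only [Fin.append_left] using hcomm (Fin.castAdd (1 + (n + n)) j)
  have hcommB : ∀ i : Fin n,
      ‖g' * (p * b i * p) - (p * b i * p) * g'‖ < δ := by
    intro i
    simpa only [Fin.append_right, Fin.append_left] using
      hcomm (Fin.natAdd m (Fin.natAdd 1 (Fin.castAdd n i)))
  have hcommP : ‖g' * p - p * g'‖ < δ := by
    simpa only [Fin.append_right, Fin.append_left] using
      hcomm (Fin.natAdd m (Fin.castAdd (n + n) (0 : Fin 1)))
  -- the cut-down element
  set u : A := 1 - g' with hu_def
  have hg'sa : star g' = g' := (IsSelfAdjoint.of_nonneg hg'0).star_eq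
  have hu_star : star u = u := by rw [hu_def, star_sub, star_one, hg'sa]
  have hu0 : (0 : A) ≤ u := sub_nonneg.mpr hg'1
  have hu_norm : ‖u‖ ≤ 1 := by
    have h := CStarAlgebra.norm_le_norm_of_nonneg_of_le hu0 (sub_le_self 1 hg'0)
    rwa [norm_one] at h
  have hbound1 : ∀ z : A, ‖p * (u * z) * p‖ ≤ ‖z‖ := fun z =>
    (hmulle' _ _ hp_norm).trans ((hmulle _ _ hp_norm).trans (hmulle _ _ hu_norm))
  have hbound2 : ∀ z : A, ‖p * (u * (z * u)) * p‖ ≤ ‖z‖ := fun z =>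
    (hmulle' _ _ hp_norm).trans ((hmulle _ _ hp_norm).trans
      ((hmulle _ _ hu_norm).trans (hmulle' _ _ hu_norm)))
  set g : A := p * g' * p with hg_def
  have hpg : p - g = p * u * p := by
    rw [hg_def, hu_def, mul_sub, mul_one, sub_mul, hpp]
  have hgB : g ∈ B := mul_mem (mul_mem hpB hg'B) hpB
  have hg0 : (0 : A) ≤ g := by
    have h := star_right_conjugate_nonneg hg'0 p
    rwa [hpsa.star_eq] at h
  have hg1 : g ≤ 1 := by
    have h := star_left_conjugate_le_conjugate hg'1 p
    rw [hpsa.star_eq, mul_one, hpp] at h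
    exact h.trans hp_le_one
  refine ⟨fun j => p * (u * c' (Fin.castAdd (1 + (n + n)) j)) * p,
    fun i => (p * (u * c' (Fin.natAdd m (Fin.natAdd 1 (Fin.natAdd n i)))))
      * star (p * (u * c' (Fin.natAdd m (Fin.natAdd 1 (Fin.natAdd n i))))),
    g, ?_, ?_, hgB, (hre g').symm, hg0, hg1, ?_, ?_, ?_, ?_, ?_, ?_, ?_⟩
  · -- c j ∈ B and corner
    intro j
    exact ⟨mul_mem (mul_mem hpB (hinB _)) hpB, (hre _).symm⟩
  · -- d i ∈ B, corner, nonneg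
    intro i
    exact ⟨mul_mem (mul_mem hpB (hinB _)) (star_mem (mul_mem hpB (hinB _))),
      (hdcorner _).symm, mul_star_self_nonneg _⟩
  · -- approximation of (p-g)(p a j p)
    intro j
    have hid : (p - g) * (p * a j * p) - p * (u * c' (Fin.castAdd (1 + (n + n)) j)) * p
        = p * (u * (p * a j * p - c' (Fin.castAdd (1 + (n + n)) j))) * p := by
      rw [hpg]
      simp only [mul_sub, sub_mul, mul_assoc, hpp, hpp']
    rw [hid]
    refine (hbound1 _).trans_lt ?_
    rw [norm_sub_rev]
    exact (happA j).trans hδε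
  · -- approximation of (p-g)(p b i p)(p-g)
    intro i
    set ci := c' (Fin.natAdd m (Fin.natAdd 1 (Fin.natAdd n i))) with hci_def
    have hid : (p - g) * (p * b i * p) * (p - g)
        - (p * (u * ci)) * star (p * (u * ci))
        = p * (u * ((p * b i * p - ci * star ci) * u)) * p := by
      rw [hpg]
      have hstar : star (p * (u * ci)) = star ci * (u * p) := by
        rw [star_mul, star_mul, hu_star, hpsa.star_eq, mul_assoc]
      rw [hstar]
      simp only [mul_sub, sub_mul, mul_assoc, hpp, hpp']
    rw [hid]
    refine lt_of_le_of_lt (hbound2 _) ?_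
    rw [← hs_sq i]
    -- ‖s i * s i - ci * star ci‖ < ε
    have n1 : ‖s i - ci‖ < δ := by rw [norm_sub_rev]; exact happS i
    have hci_norm : ‖ci‖ ≤ K := by
      have h := norm_sub_norm_le ci (s i)
      have := hsK i
      nlinarith [norm_nonneg (ci - s i), happS i]
    have h3 : s i * s i - ci * star ci = (s i - ci) * s i + ci * star (s i - ci) := by
      rw [star_sub, hs_sa]
      noncomm_ring
    have e0 : ‖s i * s i - ci * star ci‖ ≤ ‖(s i - ci) * s i‖ + ‖ci * star (s i - ci)‖ := by
      rw [h3]; exact norm_add_le _ _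
    have e1 : ‖(s i - ci) * s i‖ ≤ ‖s i - ci‖ * ‖s i‖ := norm_mul_le _ _
    have e2 : ‖ci * star (s i - ci)‖ ≤ ‖ci‖ * ‖s i - ci‖ := by
      refine (norm_mul_le _ _).trans ?_
      rw [norm_star]
    have hsKi := hsK i
    nlinarith [norm_nonneg (s i - ci), norm_nonneg ci, norm_nonneg (s i)]
  · -- Cuntz subequivalence of g below y inside the corner of B
    obtain ⟨v, hvB, hvlim⟩ := hCy
    refine ⟨fun k => p * v k * p,
      fun k => ⟨mul_mem (mul_mem hpB (hvB k)) hpB, (hre (v k)).symm⟩, ?_⟩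
    have heq : (fun k => (p * v k * p) * y * star (p * v k * p))
        = fun k => p * (v k * y * star (v k)) * p := by
      funext k
      rw [star_mul, star_mul, hpsa.star_eq, hyp]
      simp only [mul_assoc, hpp, hpp']
    rw [heq, hg_def]
    exact (hvlim.const_mul p).mul_const p
  · -- Cuntz subequivalence of g below x inside the corner of A
    obtain ⟨v, hvlim⟩ := hCx
    refine ⟨fun k => p * v k * p, fun k => (hre (v k)).symm, ?_⟩
    have heq : (fun k => (p * v k * p) * x * star (p * v k * p))
        = fun k => p * (v k * x * star (v k)) * p := by
      funext k
      rw [star_mul, star_mul, hpsa.star_eq, hxp]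
      simp only [mul_assoc, hpp, hpp']
    rw [heq, hg_def]
    exact (hvlim.const_mul p).mul_const p
  · -- norm lower bound
    have ht : ‖p * u - u * p‖ < δ := by
      have h : p * u - u * p = g' * p - p * g' := by
        rw [hu_def]; noncomm_ring
      rw [h]; exact hcommP
    have hup : ‖u * p‖ ≤ 1 := (hmulle _ _ hu_norm).trans hp_norm
    have hxid : ∀ z : A,
        (p * u * p) * (p * z * p) * (p * u * p) - u * (p * z * p) * u
        = (p * u - u * p) * ((p * z * p) * (u * p))
          - (u * p) * ((p * z * p) * (p * u - u * p)) := by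
      intro z
      simp only [mul_sub, sub_mul, mul_assoc, hpp, hpp']
      abel
    have hkey : (p - g) * x * (p - g) - u * x * u
        = (p * u - u * p) * (x * (u * p)) - (u * p) * (x * (p * u - u * p)) := by
      rw [hpg]
      have h := hxid x
      rw [← hxp] at h
      exact h
    have h1 : ‖(p * u - u * p) * (x * (u * p))‖ ≤ ‖p * u - u * p‖ := by
      refine hmulle' _ _ ?_
      exact (hmulle _ _ (le_of_eq hxnorm)).trans hup
    have h2 : ‖(u * p) * (x * (p * u - u * p))‖ ≤ ‖p * u - u * p‖ := by
      refine (hmulle _ _ hup).trans ?_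
      exact hmulle _ _ (le_of_eq hxnorm)
    have h4 : ‖(p - g) * x * (p - g) - u * x * u‖ ≤ 2 * ‖p * u - u * p‖ := by
      rw [hkey]
      calc ‖(p * u - u * p) * (x * (u * p)) - (u * p) * (x * (p * u - u * p))‖
          ≤ ‖(p * u - u * p) * (x * (u * p))‖ + ‖(u * p) * (x * (p * u - u * p))‖ :=
            norm_sub_le _ _
        _ ≤ 2 * ‖p * u - u * p‖ := by linarith
    have h5 : ‖u * x * u‖ - ‖(p - g) * x * (p - g)‖
        ≤ ‖u * x * u - (p - g) * x * (p - g)‖ := norm_sub_norm_le _ _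
    rw [norm_sub_rev] at h5
    have h6 : ‖u * x * u‖ > 1 - δ := by
      rw [hu_def] at *
      exact hnrm
    have : (0:ℝ) < ε := hε
    linarith
  · -- commutator with p a j p
    intro j
    have hid : g * (p * a j * p) - (p * a j * p) * g
        = p * (g' * (p * a j * p) - (p * a j * p) * g') * p := by
      rw [hg_def]
      simp only [mul_sub, sub_mul, mul_assoc, hpp, hpp']
    rw [hid]
    exact lt_of_le_of_lt ((hpzp _).trans_lt (hcommA j)).le hδε
  · -- commutator with p b i p
    intro i
    have hid : g * (p * b i * p) - (p * b i * p) * g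
        = p * (g' * (p * b i * p) - (p * b i * p) * g') * p := by
      rw [hg_def]
      simp only [mul_sub, sub_mul, mul_assoc, hpp, hpp']
    rw [hid]
    exact lt_of_le_of_lt ((hpzp _).trans_lt (hcommB i)).le hδε
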